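/- Let p, q, Q be probability measures on a measurable space, E and A events with Q(E) ≥ δ, Q(Aᶜ) ≤ δ/2, and suppose that on E ∩ A the likelihood ratio satisfies p(ω)/Q(ω) ≥ 2^{−K} pointwise (for atomic measures on a countable space). Then p(E) ≥ (δ/2)·2^{−K}. -/
import Mathlib


/-- change of measure on a countable space. If `Q(E) ≥ δ`, `Q(Aᶜ) ≤ δ/2`,
and `p(ω)/Q(ω) ≥ 2^{−K}` pointwise on `E ∩ A`, then `p(E) ≥ (δ/2)·2^{−K}`. -/
theorem change_of_measure_bound {Ω : Type*} [Countable Ω]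
    (p Q : Ω → ℝ) (hp : ∀ ω, 0 ≤ p ω) (hQ : ∀ ω, 0 ≤ Q ω)
    (hpsum : ∑' ω, p ω = 1) (hQsum : ∑' ω, Q ω = 1)
    (E A : Set Ω) (δ K : ℝ) (hδ : 0 < δ) (hK : 0 ≤ K)
    (hQE : ∑' ω : E, Q ω ≥ δ)
    (hQA : ∑' ω : (Aᶜ : Set Ω), Q ω ≤ δ / 2)
    (hratio : ∀ ω ∈ E ∩ A, p ω / Q ω ≥ 2 ^ (-K)) :
    ∑' ω : E, p ω ≥ (δ / 2) * 2 ^ (-K) := by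
  set c : ℝ := (2 : ℝ) ^ (-K) with hc
  have hc0 : 0 < c := Real.rpow_pos_of_pos (by norm_num) _
  have hpsummable : Summable p := by
    by_contra h
    rw [tsum_eq_zero_of_not_summable h] at hpsum
    norm_num at hpsum
  have hQsummable : Summable Q := by
    by_contra h
    rw [tsum_eq_zero_of_not_summable h] at hQsum
    norm_num at hQsum
  -- pointwise: on E ∩ A, p ω ≥ c * Q ω
  have hpt : ∀ ω ∈ E ∩ A, c * Q ω ≤ p ω := by
    intro ω hω
    have h := hratio ω hω
    rcases eq_or_lt_of_le (hQ ω) with h0 | h0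
    · rw [← h0] at h ⊢
      simp only [div_zero] at h
      linarith
    · rw [ge_iff_le, le_div_iff₀ h0] at h
      linarith [h]
  -- rewrite tsums as indicator tsums
  rw [tsum_subtype] at hQE ⊢
  rw [tsum_subtype] at hQA
  have hQEA : ∑' ω, (E ∩ A).indicator Q ω ≥ δ / 2 := by
    have hle : ∀ ω, E.indicator Q ω ≤ (E ∩ A).indicator Q ω + (Aᶜ : Set Ω).indicator Q ω := by
      intro ω
      by_cases hE : ω ∈ E <;> by_cases hA : ω ∈ A <;>
        simp [Set.indicator_apply, hE, hA, hQ ω] <;> positivity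
    have h1 : Summable ((E ∩ A).indicator Q) := hQsummable.indicator _
    have h2 : Summable ((Aᶜ : Set Ω).indicator Q) := hQsummable.indicator _
    have := Summable.tsum_le_tsum hle (hQsummable.indicator _) (h1.add h2)
    rw [Summable.tsum_add h1 h2] at this
    linarith
  have hstep : ∑' ω, (E ∩ A).indicator p ω ≥ c * (δ / 2) := by
    have hle : ∀ ω, (E ∩ A).indicator (fun ω => c * Q ω) ω ≤ (E ∩ A).indicator p ω := by
      intro ω
      by_cases h : ω ∈ E ∩ A
      · simpa [Set.indicator_apply, h] using hpt ω h
      · simp [Set.indicator_apply, h]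
    have hsum1 : Summable ((E ∩ A).indicator (fun ω => c * Q ω)) :=
      (hQsummable.mul_left c).indicator _
    have h := Summable.tsum_le_tsum hle hsum1 (hpsummable.indicator _)
    have heq : ∑' ω, (E ∩ A).indicator (fun ω => c * Q ω) ω
        = c * ∑' ω, (E ∩ A).indicator Q ω := by
      rw [← tsum_mul_left]
      congr 1
      ext ω
      by_cases hω : ω ∈ E ∩ A <;> simp [Set.indicator_apply, hω]
    rw [heq] at h
    calc c * (δ / 2) ≤ c * ∑' ω, (E ∩ A).indicator Q ω := by
          exact mul_le_mul_of_nonneg_left hQEA hc0.le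
      _ ≤ _ := h
  have hmono : ∀ ω, (E ∩ A).indicator p ω ≤ E.indicator p ω := by
    intro ω
    by_cases hE : ω ∈ E <;> by_cases hA : ω ∈ A <;>
      simp [Set.indicator_apply, hE, hA, hp ω]
  have hfin := Summable.tsum_le_tsum hmono (hpsummable.indicator _) (hpsummable.indicator _)
  calc (δ / 2) * c = c * (δ / 2) := by ring
    _ ≤ ∑' ω, (E ∩ A).indicator p ω := hstep
    _ ≤ ∑' ω, E.indicator p ω := hfin
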